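/- Let μ₀, μ₁, ν₀, ν₁ ∈ 𝒫₂(ℝ^d) and let S denote the entropic OT cost with cost c(x,y) = ‖x−y‖²/2 and entropic regularization parameter 1. Suppose that for each pair (μ_i, ν_j) there exist optimal EOT potentials (φ_{i,j}, ψ_{i,j}) satisfying the Schrödinger system everywhere and the pointwise bound |φ_{i,j}(x)| ∨ |ψ_{i,j}(y)| ≤ F(x) resp. F(y) for a common envelope F. Then |S(μ₁,ν₁) − S(μ₀,ν₀)| ≤ sup over functions of the form φ⊕ψ with φ,ψ bounded by F of |∫ (φ⊕ψ) d(μ₁⊗ν₁ − μ₀⊗ν₀)|. -/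

import Mathlib

open MeasureTheory ENNReal
set_option linter.unusedSectionVars false

noncomputable section

/-- The entropic optimal transport cost with quadratic cost ‖x−y‖²/2 and unit regularization:
infimum over couplings of transport cost plus KL divergence relative to the product measure. -/
def Sent {E : Type*} [NormedAddCommGroup E] [MeasurableSpace E] (μ ν : Measure E) : ℝ :=
  sInf {r | ∃ π : Measure (E × E),
    π.map Prod.fst = μ ∧ π.map Prod.snd = ν ∧ π ≪ μ.prod ν ∧
    Integrable (fun z => ‖z.1 - z.2‖ ^ 2 / 2) π ∧
    Integrable (fun z => Real.log ((π.rnDeriv (μ.prod ν)) z).toReal) π ∧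
    r = (∫ z, ‖z.1 - z.2‖ ^ 2 / 2 ∂π) +
      ∫ z, Real.log ((π.rnDeriv (μ.prod ν)) z).toReal ∂π}

/-- KL divergence nonnegativity. -/
lemma kl_nonneg {X : Type*} [MeasurableSpace X] (p q : Measure X)
    [IsProbabilityMeasure p] [IsProbabilityMeasure q] (hac : p ≪ q)
    (hint : Integrable (fun x => Real.log (p.rnDeriv q x).toReal) p) :
    0 ≤ ∫ x, Real.log (p.rnDeriv q x).toReal ∂p := by
  set f : X → ℝ := fun x => (p.rnDeriv q x).toReal with hf
  have hfm : Measurable f := (Measure.measurable_rnDeriv p q).ennreal_toReal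
  have hpos : ∀ᵐ x ∂p, 0 < f x := by
    filter_upwards [Measure.rnDeriv_pos hac, hac.ae_le (Measure.rnDeriv_lt_top p q)]
      with x h1 h2
    exact ENNReal.toReal_pos h1.ne' h2.ne
  -- the inverse is integrable with integral at most 1
  have hlim : ∫⁻ x, ENNReal.ofReal (f x)⁻¹ ∂p ≤ 1 := by
    conv_lhs => rw [← Measure.withDensity_rnDeriv_eq p q hac]
    rw [lintegral_withDensity_eq_lintegral_mul q (Measure.measurable_rnDeriv p q)
      (g := fun x => ENNReal.ofReal (f x)⁻¹) (hfm.inv.ennreal_ofReal)]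
    have hle : ∀ x, (p.rnDeriv q x) * ENNReal.ofReal (f x)⁻¹ ≤ 1 := by
      intro x
      rcases eq_or_ne (p.rnDeriv q x) ∞ with h | h
      · simp [hf, h]
      · rcases eq_or_ne (p.rnDeriv q x) 0 with h0 | h0
        · simp [h0]
        · have hfx : 0 < f x := ENNReal.toReal_pos h0 h
          rw [ENNReal.ofReal_inv_of_pos hfx, ENNReal.ofReal_toReal h,
            ENNReal.mul_inv_cancel h0 h]
    have : ∫⁻ a, (p.rnDeriv q * fun x => ENNReal.ofReal (f x)⁻¹) a ∂q ≤ ∫⁻ _, 1 ∂q :=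
      lintegral_mono fun x => by simpa [Pi.mul_apply] using hle x
    simpa using this
  have hinv_int : Integrable (fun x => (f x)⁻¹) p := by
    refine ⟨hfm.inv.aestronglyMeasurable, ?_⟩
    rw [hasFiniteIntegral_iff_ofReal (by filter_upwards [hpos] with x hx
      using (inv_pos.2 hx).le)]
    exact lt_of_le_of_lt hlim (by norm_num)
  have hinv_le : ∫ x, (f x)⁻¹ ∂p ≤ 1 := by
    rw [integral_eq_lintegral_of_nonneg_ae (f := fun x => (f x)⁻¹) (by filter_upwards [hpos] with x hx
      using (inv_pos.2 hx).le) hfm.inv.aestronglyMeasurable]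
    calc (∫⁻ x, ENNReal.ofReal (f x)⁻¹ ∂p).toReal ≤ (1 : ℝ≥0∞).toReal :=
      ENNReal.toReal_mono (by norm_num) hlim
      _ = 1 := by simp
  have hmono : ∫ x, (1 - (f x)⁻¹) ∂p ≤ ∫ x, Real.log (f x) ∂p := by
    refine integral_mono_ae ((integrable_const 1).sub hinv_int) hint ?_
    filter_upwards [hpos] with x hx
    have := Real.log_le_sub_one_of_pos (inv_pos.2 hx)
    rw [Real.log_inv] at this
    linarith
  have : ∫ x, (1 - (f x)⁻¹) ∂p = 1 - ∫ x, (f x)⁻¹ ∂p := by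
    rw [integral_sub (integrable_const 1) hinv_int]; simp
  linarith [hmono, this ▸ hmono]

section helpers
variable {X : Type*} [MeasurableSpace X] {E : Type*} [NormedAddCommGroup E]
  [MeasurableSpace E] [BorelSpace E] [SecondCountableTopology E]

lemma lintegral_ofReal_eq_one (m : Measure X) (f : X → ℝ) (hm : Measurable f)
    (hnn : ∀ x, 0 ≤ f x) (h : ∫ x, f x ∂m = 1) :
    ∫⁻ x, ENNReal.ofReal (f x) ∂m = 1 := by
  by_cases htop : ∫⁻ x, ENNReal.ofReal (f x) ∂m = ∞
  · exfalso
    have hni : ¬ Integrable f m := fun hi => by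
      have := (hasFiniteIntegral_iff_ofReal (ae_of_all _ hnn)).1 hi.2
      exact absurd htop this.ne
    rw [integral_undef hni] at h; norm_num at h
  · have hi : Integrable f m :=
      ⟨hm.aestronglyMeasurable,
        (hasFiniteIntegral_iff_ofReal (ae_of_all _ hnn)).2 (lt_top_iff_ne_top.2 htop)⟩
    rw [← ofReal_integral_eq_lintegral_ofReal hi (ae_of_all _ hnn), h, ENNReal.ofReal_one]

lemma cost_meas : Measurable (fun z : E × E => ‖z.1 - z.2‖ ^ 2 / 2) :=
  ((measurable_fst.sub measurable_snd).norm.pow_const 2).div_const 2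

lemma mass_left (μ ν : Measure E) [IsProbabilityMeasure μ] [IsProbabilityMeasure ν]
    (φ ψ : E → ℝ) (hφ : Measurable φ) (hψ : Measurable ψ)
    (h : ∀ x, ∫ y, Real.exp (φ x + ψ y - ‖x - y‖ ^ 2 / 2) ∂ν = 1) :
    ∫⁻ z, ENNReal.ofReal (Real.exp (φ z.1 + ψ z.2 - ‖z.1 - z.2‖ ^ 2 / 2)) ∂(μ.prod ν) = 1 := by
  have hg : Measurable fun z : E × E =>
      ENNReal.ofReal (Real.exp (φ z.1 + ψ z.2 - ‖z.1 - z.2‖ ^ 2 / 2)) :=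
    (((hφ.comp measurable_fst).add (hψ.comp measurable_snd)).sub cost_meas).exp.ennreal_ofReal
  rw [lintegral_prod _ hg.aemeasurable]
  have : ∀ x, ∫⁻ y, ENNReal.ofReal (Real.exp (φ x + ψ y - ‖x - y‖ ^ 2 / 2)) ∂ν = 1 := by
    intro x
    refine lintegral_ofReal_eq_one ν _ ?_ (fun y => (Real.exp_pos _).le) (h x)
    exact ((measurable_const.add hψ).sub
      (((measurable_const.sub measurable_id).norm.pow_const 2).div_const 2)).exp
  simp only [this, lintegral_one, measure_univ]

lemma mass_right (μ ν : Measure E) [IsProbabilityMeasure μ] [IsProbabilityMeasure ν]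
    (φ ψ : E → ℝ) (hφ : Measurable φ) (hψ : Measurable ψ)
    (h : ∀ y, ∫ x, Real.exp (φ x + ψ y - ‖x - y‖ ^ 2 / 2) ∂μ = 1) :
    ∫⁻ z, ENNReal.ofReal (Real.exp (φ z.1 + ψ z.2 - ‖z.1 - z.2‖ ^ 2 / 2)) ∂(μ.prod ν) = 1 := by
  have hg : Measurable fun z : E × E =>
      ENNReal.ofReal (Real.exp (φ z.1 + ψ z.2 - ‖z.1 - z.2‖ ^ 2 / 2)) :=
    (((hφ.comp measurable_fst).add (hψ.comp measurable_snd)).sub cost_meas).exp.ennreal_ofReal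
  rw [lintegral_prod_symm _ hg.aemeasurable]
  have : ∀ y, ∫⁻ x, ENNReal.ofReal (Real.exp (φ x + ψ y - ‖x - y‖ ^ 2 / 2)) ∂μ = 1 := by
    intro y
    refine lintegral_ofReal_eq_one μ _ ?_ (fun x => (Real.exp_pos _).le) (h y)
    exact ((hφ.add measurable_const).sub
      (((measurable_id.sub measurable_const).norm.pow_const 2).div_const 2)).exp
  simp only [this, lintegral_one, measure_univ]

lemma map_fst_prod' (μ ν : Measure E) [IsProbabilityMeasure μ] [IsProbabilityMeasure ν] :
    (μ.prod ν).map Prod.fst = μ := by simp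

lemma map_snd_prod' (μ ν : Measure E) [IsProbabilityMeasure μ] [IsProbabilityMeasure ν] :
    (μ.prod ν).map Prod.snd = ν := by simp

lemma integrable_comp_fst (μ ν : Measure E) [IsProbabilityMeasure μ] [IsProbabilityMeasure ν]
    {f : E → ℝ} (hi : Integrable f μ) : Integrable (fun z : E × E => f z.1) (μ.prod ν) := by
  have hmap := map_fst_prod' μ ν
  rw [← hmap] at hi
  exact (integrable_map_measure hi.1 measurable_fst.aemeasurable).1 hi

lemma integrable_comp_snd (μ ν : Measure E) [IsProbabilityMeasure μ] [IsProbabilityMeasure ν]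
    {f : E → ℝ} (hi : Integrable f ν) : Integrable (fun z : E × E => f z.2) (μ.prod ν) := by
  have hmap := map_snd_prod' μ ν
  rw [← hmap] at hi
  exact (integrable_map_measure hi.1 measurable_snd.aemeasurable).1 hi

lemma integral_comp_fst (μ ν : Measure E) [IsProbabilityMeasure μ] [IsProbabilityMeasure ν]
    {f : E → ℝ} (hf : AEStronglyMeasurable f μ) :
    ∫ z, f z.1 ∂(μ.prod ν) = ∫ x, f x ∂μ := by
  have hmap := map_fst_prod' μ ν
  conv_rhs => rw [← hmap]
  rw [integral_map measurable_fst.aemeasurable (by rw [hmap]; exact hf)]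

lemma integral_comp_snd (μ ν : Measure E) [IsProbabilityMeasure μ] [IsProbabilityMeasure ν]
    {f : E → ℝ} (hf : AEStronglyMeasurable f ν) :
    ∫ z, f z.2 ∂(μ.prod ν) = ∫ y, f y ∂ν := by
  have hmap := map_snd_prod' μ ν
  conv_rhs => rw [← hmap]
  rw [integral_map measurable_snd.aemeasurable (by rw [hmap]; exact hf)]

lemma integral_oplus (μ ν : Measure E) [IsProbabilityMeasure μ] [IsProbabilityMeasure ν]
    {f g : E → ℝ} (hf : Integrable f μ) (hg : Integrable g ν) :
    ∫ z, (f z.1 + g z.2) ∂(μ.prod ν) = (∫ x, f x ∂μ) + ∫ y, g y ∂ν := by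
  rw [integral_add (integrable_comp_fst μ ν hf) (integrable_comp_snd μ ν hg),
    integral_comp_fst μ ν hf.1, integral_comp_snd μ ν hg.1]

end helpers

section core
variable {E : Type*} [NormedAddCommGroup E]
  [MeasurableSpace E] [BorelSpace E] [SecondCountableTopology E]

lemma sent_nonempty (μ ν : Measure E) [IsProbabilityMeasure μ] [IsProbabilityMeasure ν]
    (hmomμ : Integrable (fun x => ‖x‖ ^ 2) μ) (hmomν : Integrable (fun x => ‖x‖ ^ 2) ν) :
    {r | ∃ π : Measure (E × E),
      π.map Prod.fst = μ ∧ π.map Prod.snd = ν ∧ π ≪ μ.prod ν ∧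
      Integrable (fun z => ‖z.1 - z.2‖ ^ 2 / 2) π ∧
      Integrable (fun z => Real.log ((π.rnDeriv (μ.prod ν)) z).toReal) π ∧
      r = (∫ z, ‖z.1 - z.2‖ ^ 2 / 2 ∂π) +
        ∫ z, Real.log ((π.rnDeriv (μ.prod ν)) z).toReal ∂π}.Nonempty := by
  have hcost : Integrable (fun z : E × E => ‖z.1 - z.2‖ ^ 2 / 2) (μ.prod ν) := by
    refine Integrable.mono' ((integrable_comp_fst μ ν hmomμ).add (integrable_comp_snd μ ν hmomν))
      cost_meas.aestronglyMeasurable (ae_of_all _ fun z => ?_)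
    rw [Real.norm_eq_abs, abs_of_nonneg (by positivity)]
    simp only [Pi.add_apply]
    nlinarith [norm_sub_le z.1 z.2, norm_nonneg (z.1 - z.2), norm_nonneg z.1, norm_nonneg z.2,
      sq_nonneg (‖z.1‖ - ‖z.2‖)]
  have hrn := Measure.rnDeriv_self (μ.prod ν)
  have hlog0 : (fun z => Real.log (((μ.prod ν).rnDeriv (μ.prod ν)) z).toReal)
      =ᵐ[μ.prod ν] fun _ => (0 : ℝ) := by
    filter_upwards [hrn] with z hz; simp [hz]
  have hli : Integrable (fun z => Real.log (((μ.prod ν).rnDeriv (μ.prod ν)) z).toReal)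
      (μ.prod ν) := (integrable_const (0 : ℝ)).congr hlog0.symm
  exact ⟨_, μ.prod ν, map_fst_prod' μ ν, map_snd_prod' μ ν,
    Measure.AbsolutelyContinuous.rfl, hcost, hli, rfl⟩

lemma weak_duality (μ ν : Measure E) [IsProbabilityMeasure μ] [IsProbabilityMeasure ν]
    (hmomμ : Integrable (fun x => ‖x‖ ^ 2) μ) (hmomν : Integrable (fun x => ‖x‖ ^ 2) ν)
    {φ ψ : E → ℝ} (hφm : Measurable φ) (hψm : Measurable ψ)
    (hφi : Integrable φ μ) (hψi : Integrable ψ ν)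
    (hmass : ∫⁻ z, ENNReal.ofReal (Real.exp (φ z.1 + ψ z.2 - ‖z.1 - z.2‖ ^ 2 / 2))
      ∂(μ.prod ν) = 1) :
    (∫ x, φ x ∂μ) + ∫ y, ψ y ∂ν ≤ Sent μ ν := by
  refine le_csInf (sent_nonempty μ ν hmomμ hmomν) ?_
  rintro r ⟨π, hm1, hm2, hac, hci, hli, hr⟩
  haveI : IsProbabilityMeasure π := by
    constructor
    have := congrArg (fun m : Measure E => m Set.univ) hm1
    simpa [Measure.map_apply measurable_fst MeasurableSet.univ] using this
  set g : E × E → ℝ := fun z => φ z.1 + ψ z.2 - ‖z.1 - z.2‖ ^ 2 / 2 with hgdef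
  have hgm : Measurable g :=
    ((hφm.comp measurable_fst).add (hψm.comp measurable_snd)).sub cost_meas
  set dens : E × E → ℝ≥0∞ := fun z => ENNReal.ofReal (Real.exp (g z)) with hddef
  have hdm : Measurable dens := hgm.exp.ennreal_ofReal
  have hd0 : ∀ z, dens z ≠ 0 := fun z => (ENNReal.ofReal_pos.2 (Real.exp_pos _)).ne'
  have hdt : ∀ z, dens z ≠ ∞ := fun z => ENNReal.ofReal_ne_top
  set τ := (μ.prod ν).withDensity dens with hτdef
  haveI : IsProbabilityMeasure τ := by
    constructor
    rw [hτdef, withDensity_apply _ MeasurableSet.univ, Measure.restrict_univ]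
    exact hmass
  have hπτ : π ≪ τ := hac.trans
    (withDensity_absolutelyContinuous' hdm.aemeasurable (ae_of_all _ hd0))
  have hrnd := Measure.rnDeriv_withDensity_right π (μ.prod ν) hdm.aemeasurable
    (ae_of_all _ hd0) (ae_of_all _ hdt)
  have hkey : (fun z => Real.log ((π.rnDeriv τ) z).toReal)
      =ᵐ[π] fun z => Real.log ((π.rnDeriv (μ.prod ν)) z).toReal - g z := by
    filter_upwards [hac.ae_le hrnd, Measure.rnDeriv_pos hac,
      hac.ae_le (Measure.rnDeriv_lt_top π (μ.prod ν))] with z h1 h2 h3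
    rw [h1, ENNReal.toReal_mul, ENNReal.toReal_inv]
    have hdz : (dens z).toReal = Real.exp (g z) := ENNReal.toReal_ofReal (Real.exp_pos _).le
    rw [hdz, Real.log_mul (by positivity) (ENNReal.toReal_pos h2.ne' h3.ne).ne',
      Real.log_inv, Real.log_exp]
    ring
  have h1i : Integrable (fun z : E × E => φ z.1) π := by
    have h := hφi; rw [← hm1] at h
    exact (integrable_map_measure h.1 measurable_fst.aemeasurable).1 h
  have h2i : Integrable (fun z : E × E => ψ z.2) π := by
    have h := hψi; rw [← hm2] at h
    exact (integrable_map_measure h.1 measurable_snd.aemeasurable).1 h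
  have hgi : Integrable g π := (h1i.add h2i).sub hci
  have hlτ : Integrable (fun z => Real.log ((π.rnDeriv τ) z).toReal) π :=
    (hli.sub hgi).congr hkey.symm
  have h0 := kl_nonneg π τ hπτ hlτ
  have heval : ∫ z, Real.log ((π.rnDeriv τ) z).toReal ∂π
      = (∫ z, Real.log ((π.rnDeriv (μ.prod ν)) z).toReal ∂π) - ∫ z, g z ∂π := by
    rw [integral_congr_ae hkey, integral_sub hli hgi]
  have e1 : ∫ z, φ z.1 ∂π = ∫ x, φ x ∂μ := by
    conv_rhs => rw [← hm1]
    rw [integral_map measurable_fst.aemeasurable (by rw [hm1]; exact hφi.1)]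
  have e2 : ∫ z, ψ z.2 ∂π = ∫ y, ψ y ∂ν := by
    conv_rhs => rw [← hm2]
    rw [integral_map measurable_snd.aemeasurable (by rw [hm2]; exact hψi.1)]
  have hgval : ∫ z, g z ∂π
      = (∫ x, φ x ∂μ) + (∫ y, ψ y ∂ν) - ∫ z, ‖z.1 - z.2‖ ^ 2 / 2 ∂π := by
    have hsum : Integrable (fun z : E × E => φ z.1 + ψ z.2) π := h1i.add h2i
    have hstep : ∫ z, g z ∂π = (∫ z, (φ z.1 + ψ z.2) ∂π) - ∫ z, ‖z.1 - z.2‖ ^ 2 / 2 ∂π :=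
      integral_sub hsum hci
    rw [hstep, integral_add h1i h2i, e1, e2]
  rw [hr]
  rw [heval, hgval] at h0
  linarith
end core

/-- Lipschitz-type bound for the entropic OT cost: if for each pair
(μ_i, ν_j) there are optimal EOT potentials satisfying the Schrödinger system everywhere and
bounded by a common envelope F, then |S(μ₁,ν₁) − S(μ₀,ν₀)| is bounded by the supremum of
|∫ (φ⊕ψ) d(μ₁⊗ν₁ − μ₀⊗ν₀)| over pairs of functions bounded by F. -/
theorem stmt15 {d : ℕ} (μs νs : Fin 2 → Measure (EuclideanSpace ℝ (Fin d)))
    [∀ i, IsProbabilityMeasure (μs i)] [∀ j, IsProbabilityMeasure (νs j)]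
    (hmom : ∀ i, Integrable (fun x => ‖x‖ ^ 2) (μs i) ∧ Integrable (fun x => ‖x‖ ^ 2) (νs i))
    (F : EuclideanSpace ℝ (Fin d) → ℝ)
    (hFint : ∀ i, Integrable F (μs i) ∧ Integrable F (νs i))
    (φ ψ : Fin 2 → Fin 2 → EuclideanSpace ℝ (Fin d) → ℝ)
    (hmeas : ∀ i j, Measurable (φ i j) ∧ Measurable (ψ i j))
    (hSch₁ : ∀ i j, ∀ x,
      ∫ y, Real.exp (φ i j x + ψ i j y - ‖x - y‖ ^ 2 / 2) ∂(νs j) = 1)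
    (hSch₂ : ∀ i j, ∀ y,
      ∫ x, Real.exp (φ i j x + ψ i j y - ‖x - y‖ ^ 2 / 2) ∂(μs i) = 1)
    (henv : ∀ i j, (∀ x, |φ i j x| ≤ F x) ∧ ∀ y, |ψ i j y| ≤ F y)
    (hopt : ∀ i j, Sent (μs i) (νs j) = (∫ x, φ i j x ∂(μs i)) + ∫ y, ψ i j y ∂(νs j)) :
    |Sent (μs 1) (νs 1) - Sent (μs 0) (νs 0)| ≤
      sSup {r | ∃ φ' ψ' : EuclideanSpace ℝ (Fin d) → ℝ, Measurable φ' ∧ Measurable ψ' ∧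
        (∀ x, |φ' x| ≤ F x) ∧ (∀ y, |ψ' y| ≤ F y) ∧
        r = |(∫ z, (φ' z.1 + ψ' z.2) ∂((μs 1).prod (νs 1))) -
              ∫ z, (φ' z.1 + ψ' z.2) ∂((μs 0).prod (νs 0))|} := by
  set S := {r | ∃ φ' ψ' : EuclideanSpace ℝ (Fin d) → ℝ, Measurable φ' ∧ Measurable ψ' ∧
        (∀ x, |φ' x| ≤ F x) ∧ (∀ y, |ψ' y| ≤ F y) ∧
        r = |(∫ z, (φ' z.1 + ψ' z.2) ∂((μs 1).prod (νs 1))) -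
              ∫ z, (φ' z.1 + ψ' z.2) ∂((μs 0).prod (νs 0))|} with hSdef
  -- integrability of the potentials against any of the marginals
  have hφint : ∀ i j k, Integrable (φ i j) (μs k) := fun i j k =>
    Integrable.mono' (hFint k).1 (hmeas i j).1.aestronglyMeasurable
      (ae_of_all _ fun x => by rw [Real.norm_eq_abs]; exact (henv i j).1 x)
  have hφint' : ∀ i j k, Integrable (φ i j) (νs k) := fun i j k =>
    Integrable.mono' (hFint k).2 (hmeas i j).1.aestronglyMeasurable
      (ae_of_all _ fun x => by rw [Real.norm_eq_abs]; exact (henv i j).1 x)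
  have hψint : ∀ i j k, Integrable (ψ i j) (νs k) := fun i j k =>
    Integrable.mono' (hFint k).2 (hmeas i j).2.aestronglyMeasurable
      (ae_of_all _ fun x => by rw [Real.norm_eq_abs]; exact (henv i j).2 x)
  -- the four one-sided duality bounds
  have hA : (∫ x, φ 1 1 x ∂(μs 0)) + ∫ y, ψ 1 1 y ∂(νs 1) ≤ Sent (μs 0) (νs 1) :=
    weak_duality _ _ (hmom 0).1 (hmom 1).2 (hmeas 1 1).1 (hmeas 1 1).2
      (hφint 1 1 0) (hψint 1 1 1)
      (mass_left _ _ _ _ (hmeas 1 1).1 (hmeas 1 1).2 (hSch₁ 1 1))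
  have hB : (∫ x, φ 0 1 x ∂(μs 0)) + ∫ y, ψ 0 1 y ∂(νs 0) ≤ Sent (μs 0) (νs 0) :=
    weak_duality _ _ (hmom 0).1 (hmom 0).2 (hmeas 0 1).1 (hmeas 0 1).2
      (hφint 0 1 0) (hψint 0 1 0)
      (mass_right _ _ _ _ (hmeas 0 1).1 (hmeas 0 1).2 (hSch₂ 0 1))
  have hC : (∫ x, φ 0 0 x ∂(μs 1)) + ∫ y, ψ 0 0 y ∂(νs 0) ≤ Sent (μs 1) (νs 0) :=
    weak_duality _ _ (hmom 1).1 (hmom 0).2 (hmeas 0 0).1 (hmeas 0 0).2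
      (hφint 0 0 1) (hψint 0 0 0)
      (mass_left _ _ _ _ (hmeas 0 0).1 (hmeas 0 0).2 (hSch₁ 0 0))
  have hD : (∫ x, φ 1 0 x ∂(μs 1)) + ∫ y, ψ 1 0 y ∂(νs 1) ≤ Sent (μs 1) (νs 1) :=
    weak_duality _ _ (hmom 1).1 (hmom 1).2 (hmeas 1 0).1 (hmeas 1 0).2
      (hφint 1 0 1) (hψint 1 0 1)
      (mass_right _ _ _ _ (hmeas 1 0).1 (hmeas 1 0).2 (hSch₂ 1 0))
  -- the supremum set is bounded above
  have hbdd : BddAbove S := by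
    refine ⟨(∫ x, F x ∂(μs 1)) + (∫ y, F y ∂(νs 1)) +
      ((∫ x, F x ∂(μs 0)) + ∫ y, F y ∂(νs 0)), ?_⟩
    rintro r ⟨φ', ψ', hφ'm, hψ'm, hφ'e, hψ'e, hr⟩
    have hφ'i : ∀ k, Integrable φ' (μs k) := fun k =>
      Integrable.mono' (hFint k).1 hφ'm.aestronglyMeasurable
        (ae_of_all _ fun x => by rw [Real.norm_eq_abs]; exact hφ'e x)
    have hψ'i : ∀ k, Integrable ψ' (νs k) := fun k =>
      Integrable.mono' (hFint k).2 hψ'm.aestronglyMeasurable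
        (ae_of_all _ fun y => by rw [Real.norm_eq_abs]; exact hψ'e y)
    have habs : ∀ k, |(∫ x, φ' x ∂(μs k)) + ∫ y, ψ' y ∂(νs k)| ≤
        (∫ x, F x ∂(μs k)) + ∫ y, F y ∂(νs k) := by
      intro k
      have b1 : |∫ x, φ' x ∂(μs k)| ≤ ∫ x, F x ∂(μs k) := by
        refine le_trans ?_ (integral_mono (hφ'i k).abs (hFint k).1 fun x => hφ'e x)
        simpa [Real.norm_eq_abs] using norm_integral_le_integral_norm (μ := μs k) φ'
      have b2 : |∫ y, ψ' y ∂(νs k)| ≤ ∫ y, F y ∂(νs k) := by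
        refine le_trans ?_ (integral_mono (hψ'i k).abs (hFint k).2 fun y => hψ'e y)
        simpa [Real.norm_eq_abs] using norm_integral_le_integral_norm (μ := νs k) ψ'
      calc |(∫ x, φ' x ∂(μs k)) + ∫ y, ψ' y ∂(νs k)|
          ≤ |∫ x, φ' x ∂(μs k)| + |∫ y, ψ' y ∂(νs k)| := abs_add_le _ _
        _ ≤ _ := add_le_add b1 b2
    rw [hr, integral_oplus _ _ (hφ'i 1) (hψ'i 1), integral_oplus _ _ (hφ'i 0) (hψ'i 0)]
    calc |((∫ x, φ' x ∂(μs 1)) + ∫ y, ψ' y ∂(νs 1)) -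
          ((∫ x, φ' x ∂(μs 0)) + ∫ y, ψ' y ∂(νs 0))|
        ≤ |(∫ x, φ' x ∂(μs 1)) + ∫ y, ψ' y ∂(νs 1)| +
          |(∫ x, φ' x ∂(μs 0)) + ∫ y, ψ' y ∂(νs 0)| := abs_sub _ _
      _ ≤ _ := add_le_add (habs 1) (habs 0)
  -- the two witnesses
  have mem₁ : |(∫ z, (φ 1 1 z.1 + ψ 0 1 z.2) ∂((μs 1).prod (νs 1))) -
      ∫ z, (φ 1 1 z.1 + ψ 0 1 z.2) ∂((μs 0).prod (νs 0))| ∈ S :=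
    ⟨φ 1 1, ψ 0 1, (hmeas 1 1).1, (hmeas 0 1).2, (henv 1 1).1, (henv 0 1).2, rfl⟩
  have mem₂ : |(∫ z, (φ 0 0 z.1 + ψ 1 0 z.2) ∂((μs 1).prod (νs 1))) -
      ∫ z, (φ 0 0 z.1 + ψ 1 0 z.2) ∂((μs 0).prod (νs 0))| ∈ S :=
    ⟨φ 0 0, ψ 1 0, (hmeas 0 0).1, (hmeas 1 0).2, (henv 0 0).1, (henv 1 0).2, rfl⟩
  have e₁₁ : ∫ z, (φ 1 1 z.1 + ψ 0 1 z.2) ∂((μs 1).prod (νs 1)) =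
      (∫ x, φ 1 1 x ∂(μs 1)) + ∫ y, ψ 0 1 y ∂(νs 1) :=
    integral_oplus _ _ (hφint 1 1 1) (hψint 0 1 1)
  have e₁₀ : ∫ z, (φ 1 1 z.1 + ψ 0 1 z.2) ∂((μs 0).prod (νs 0)) =
      (∫ x, φ 1 1 x ∂(μs 0)) + ∫ y, ψ 0 1 y ∂(νs 0) :=
    integral_oplus _ _ (hφint 1 1 0) (hψint 0 1 0)
  have e₂₁ : ∫ z, (φ 0 0 z.1 + ψ 1 0 z.2) ∂((μs 1).prod (νs 1)) =
      (∫ x, φ 0 0 x ∂(μs 1)) + ∫ y, ψ 1 0 y ∂(νs 1) :=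
    integral_oplus _ _ (hφint 0 0 1) (hψint 1 0 1)
  have e₂₀ : ∫ z, (φ 0 0 z.1 + ψ 1 0 z.2) ∂((μs 0).prod (νs 0)) =
      (∫ x, φ 0 0 x ∂(μs 0)) + ∫ y, ψ 1 0 y ∂(νs 0) :=
    integral_oplus _ _ (hφint 0 0 0) (hψint 1 0 0)
  rw [abs_sub_le_iff]
  constructor
  · refine le_trans ?_ (le_csSup hbdd mem₁)
    refine le_trans ?_ (le_abs_self _)
    rw [e₁₁, e₁₀]
    have o₁₁ := hopt 1 1
    have o₀₁ := hopt 0 1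
    linarith
  · refine le_trans ?_ (le_csSup hbdd mem₂)
    refine le_trans ?_ (neg_le_abs _)
    rw [e₂₁, e₂₀]
    have o₀₀ := hopt 0 0
    have o₁₀ := hopt 1 0
    linarith
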